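/- For the class of all compositions and a fixed composition c of size s, the ratio [z^n]F(z) / [z^n]K(z), where K(z) = (1-z)/(1-2z) and F(z) = (1-z)^2(1-z^s)^2 z^{ks}(1-2z)^{-2}, is asymptotic to (n/2)(1-2^{-s})^2 2^{-ks} as n → ∞; in particular for c = (1) (s = 1) the constant C = (1/2)(1-2^{-s})^2 equals 1/8. -/

import Mathlib

open PowerSeries Filter

noncomputable def Gps : ℝ⟦X⟧ := PowerSeries.mk fun n => 2 ^ n

lemma hG_mul : (1 - 2 * X) * Gps = 1 := by
  have h : (1 - 2 * X) * Gps = Gps - 2 * (X * Gps) := by ring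
  rw [h]
  ext n
  cases n with
  | zero => simp [Gps]
  | succ m =>
    have h2 : (2 : ℝ⟦X⟧) = C (2:ℝ) := by
      simp only [map_ofNat]
    rw [map_sub, h2, coeff_C_mul, coeff_succ_X_mul]
    simp [Gps, pow_succ]
    ring

lemma hGinv : (1 - 2 * X : ℝ⟦X⟧)⁻¹ = Gps := by
  rw [PowerSeries.inv_eq_iff_mul_eq_one (by simp)]
  rw [mul_comm]; exact hG_mul

lemma hG2inv : ((1 - 2 * X : ℝ⟦X⟧) ^ 2)⁻¹ = Gps ^ 2 := by
  rw [PowerSeries.inv_eq_iff_mul_eq_one (by simp)]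
  rw [mul_comm, ← mul_pow, hG_mul, one_pow]

lemma coeff_G2 (n : ℕ) : (PowerSeries.coeff (R := ℝ) n) (Gps ^ 2) = (n + 1) * 2 ^ n := by
  rw [sq, coeff_mul]
  rw [Finset.Nat.sum_antidiagonal_eq_sum_range_succ_mk]
  have : ∀ i ∈ Finset.range (n + 1),
      (PowerSeries.coeff (R := ℝ) i) Gps * (PowerSeries.coeff (R := ℝ) (n - i)) Gps = 2 ^ n := by
    intro i hi
    simp only [Finset.mem_range] at hi
    simp only [Gps, coeff_mk, ← pow_add]
    congr 1
    omega
  rw [Finset.sum_congr rfl this, Finset.sum_const, Finset.card_range, nsmul_eq_mul]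
  push_cast
  ring

lemma coeff_K (m : ℕ) :
    (PowerSeries.coeff (R := ℝ) (m + 1)) ((1 - X) * (1 - 2 * X)⁻¹) = 2 ^ m := by
  rw [hGinv]
  have h : (1 - X : ℝ⟦X⟧) * Gps = Gps - X * Gps := by ring
  rw [h, map_sub, coeff_succ_X_mul]
  simp [Gps, pow_succ]
  ring

lemma coeff_F (s k m : ℕ) :
    (PowerSeries.coeff (R := ℝ) (m + 2*s + 2 + k*s))
      ((1 - X) ^ 2 * (1 - X ^ s) ^ 2 * X ^ (k * s) * Gps ^ 2)
    = (((m+2*s+2:ℕ):ℝ)+1)*2^(m+2*s+2) - 2*((((m+2*s+1:ℕ):ℝ))+1)*2^(m+2*s+1)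
      + (((m+2*s:ℕ):ℝ)+1)*2^(m+2*s)
      - 2*(((m+s+2:ℕ):ℝ)+1)*2^(m+s+2) + 4*(((m+s+1:ℕ):ℝ)+1)*2^(m+s+1)
      - 2*(((m+s:ℕ):ℝ)+1)*2^(m+s)
      + (((m+2:ℕ):ℝ)+1)*2^(m+2) - 2*(((m+1:ℕ):ℝ)+1)*2^(m+1) + ((m:ℝ)+1)*2^m := by
  have h1 : (1 - X : ℝ⟦X⟧) ^ 2 * (1 - X ^ s) ^ 2 * X ^ (k*s) * Gps ^ 2
      = X ^ (k*s) * ((1 - X) ^ 2 * (1 - X ^ s) ^ 2 * Gps ^ 2) := by ring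
  rw [h1, coeff_X_pow_mul]
  have hR : (1 - X : ℝ⟦X⟧) ^ 2 * (1 - X ^ s) ^ 2 * Gps ^ 2
      = Gps ^ 2 - 2 * (X ^ 1 * Gps ^ 2) + X ^ 2 * Gps ^ 2
        - 2 * (X ^ s * Gps ^ 2) + 4 * (X ^ (s+1) * Gps ^ 2) - 2 * (X ^ (s+2) * Gps ^ 2)
        + X ^ (2*s) * Gps ^ 2 - 2 * (X ^ (2*s+1) * Gps ^ 2) + X ^ (2*s+2) * Gps ^ 2 := by
    ring
  have h2 : (2 : ℝ⟦X⟧) = C (2:ℝ) := by simp only [map_ofNat]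
  have h4 : (4 : ℝ⟦X⟧) = C (4:ℝ) := by simp only [map_ofNat]
  rw [hR]
  simp only [map_add, map_sub, h2, h4, coeff_C_mul, coeff_X_pow_mul']
  rw [if_pos (by omega : 1 ≤ m + 2*s + 2), if_pos (by omega : 2 ≤ m + 2*s + 2),
    if_pos (by omega : s ≤ m + 2*s + 2), if_pos (by omega : s + 1 ≤ m + 2*s + 2),
    if_pos (by omega : s + 2 ≤ m + 2*s + 2), if_pos (by omega : 2*s ≤ m + 2*s + 2),
    if_pos (by omega : 2*s + 1 ≤ m + 2*s + 2), if_pos (by omega : 2*s + 2 ≤ m + 2*s + 2)]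
  have e1 : m + 2*s + 2 - 1 = m + 2*s + 1 := by omega
  have e2 : m + 2*s + 2 - 2 = m + 2*s := by omega
  have e3 : m + 2*s + 2 - s = m + s + 2 := by omega
  have e4 : m + 2*s + 2 - (s+1) = m + s + 1 := by omega
  have e5 : m + 2*s + 2 - (s+2) = m + s := by omega
  have e6 : m + 2*s + 2 - 2*s = m + 2 := by omega
  have e7 : m + 2*s + 2 - (2*s+1) = m + 1 := by omega
  have e8 : m + 2*s + 2 - (2*s+2) = m := by omega
  rw [e1, e2, e3, e4, e5, e6, e7, e8]
  simp only [coeff_G2]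
  push_cast
  ring

/-- With `K(z) = (1-z)/(1-2z)` (all compositions) and
`F(z) = (1-z)^2 (1-z^s)^2 z^{ks}(1-2z)^{-2}` (marked `k`-runs of a composition
`c` of size `s`), the ratio `[z^n]F / [z^n]K` is asymptotic to
`(n/2)(1-2^{-s})^2 2^{-ks}`; in particular for `s = 1` the constant
`C = (1/2)(1-2^{-s})^2` equals `1/8`. -/
theorem run_constant_all_compositions (s k : ℕ) (hs : 0 < s) (hk : 0 < k) :
    Tendsto
      (fun n : ℕ =>
        ((PowerSeries.coeff (R := ℝ) n
            ((1 - X) ^ 2 * (1 - X ^ s) ^ 2 * X ^ (k * s) * ((1 - 2 * X) ^ 2)⁻¹)) /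
          (PowerSeries.coeff (R := ℝ) n ((1 - X) * (1 - 2 * X)⁻¹))) /
          ((n / 2 : ℝ) * (1 - 2 ^ (-(s : ℤ))) ^ 2 * 2 ^ (-((k * s : ℕ) : ℤ))))
      atTop (nhds 1)
    ∧ ((1 / 2 : ℝ) * (1 - 2 ^ (-(1 : ℤ))) ^ 2 = 1 / 8) := by
  constructor
  · set C0 : ℝ := 3 - (k:ℝ)*s + 2*s*((2:ℝ)^s)⁻¹/(1-((2:ℝ)^s)⁻¹) with hC0
    have hlim : Tendsto (fun n : ℕ => 1 + C0 / n) atTop (nhds 1) := by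
      have h1 : Tendsto (fun n : ℕ => (n : ℝ)) atTop atTop :=
        tendsto_natCast_atTop_atTop
      have h0 : Tendsto (fun n : ℕ => C0 / (n:ℝ)) atTop (nhds 0) :=
        Tendsto.div_atTop tendsto_const_nhds h1
      simpa using h0.const_add 1
    refine Tendsto.congr' ?_ hlim
    filter_upwards [eventually_ge_atTop (2*s+2+k*s)] with n hn
    obtain ⟨m, rfl⟩ : ∃ m, n = m + 2*s + 2 + k*s := ⟨n - (2*s+2+k*s), by omega⟩
    rw [hG2inv]
    have hK' : (PowerSeries.coeff (R := ℝ) (m+2*s+2+k*s)) ((1-X)*(1-2*X)⁻¹)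
        = 2^(m+2*s+1+k*s) := by
      have h := coeff_K (m+2*s+1+k*s)
      rw [show m+2*s+1+k*s+1 = m+2*s+2+k*s by omega] at h
      exact h
    rw [hK']
    have hz1 : ((2:ℝ) ^ (-(s:ℤ))) = ((2:ℝ)^s)⁻¹ := by
      rw [zpow_neg, zpow_natCast]
    have hz2 : ((2:ℝ) ^ (-((k*s:ℕ):ℤ))) = ((2:ℝ)^(k*s))⁻¹ := by
      rw [zpow_neg, zpow_natCast]
    have ha : ((2:ℝ))^m ≠ 0 := by positivity
    have hu : ((2:ℝ))^s ≠ 0 := by positivity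
    have hv : (((2:ℝ))^s)^k ≠ 0 := by positivity
    have hu2 : (2:ℝ) ≤ 2^s := by
      calc (2:ℝ) = 2^1 := (pow_one 2).symm
      _ ≤ 2^s := pow_le_pow_right₀ (by norm_num) hs
    have hu1 : (1:ℝ) - ((2:ℝ)^s)⁻¹ ≠ 0 := by
      have : ((2:ℝ)^s)⁻¹ ≤ 2⁻¹ := by
        apply inv_anti₀ (by norm_num) hu2
      intro h
      have : ((2:ℝ)^s)⁻¹ = 1 := by linarith
      linarith
    have hn0 : ((m:ℝ)+2*s+2+k*s) ≠ 0 := by positivity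
    have hn0' : ((m+2*s+2+k*s : ℕ) : ℝ) / 2 ≠ 0 := by
      push_cast; positivity
    have hsq : ((1:ℝ) - 2 ^ (-(s:ℤ)))^2 ≠ 0 := by
      rw [hz1]; exact pow_ne_zero _ hu1
    have hzz : ((2:ℝ) ^ (-((k*s:ℕ):ℤ))) ≠ 0 := by
      rw [hz2]; positivity
    have hKT : (2:ℝ)^(m+2*s+1+k*s) *
        (((m+2*s+2+k*s : ℕ):ℝ) / 2 * (1 - 2 ^ (-(s:ℤ)))^2 * 2 ^ (-((k*s:ℕ):ℤ))) ≠ 0 := by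
      exact mul_ne_zero (by positivity) (mul_ne_zero (mul_ne_zero hn0' hsq) hzz)
    rw [div_div, eq_div_iff hKT, coeff_F, hz1, hz2, hC0]
    push_cast
    simp only [pow_add, pow_mul', pow_one]
    set a := (2:ℝ)^m with haa
    set u := (2:ℝ)^s with huu
    clear haa huu hK' hn hC0
    clear_value a u
    have hum1 : u - 1 ≠ 0 := by intro h; rw [sub_eq_zero] at h; rw [h] at hu2; linarith
    have hum2 : -1 + u ≠ 0 := by intro h; apply hum1; linarith
    field_simp
    ring
  · norm_num
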